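/- Consider the matrix ODE along a curve: for continuous functions f, g : [0,1] → ℂ and a parameter u ∈ ℂ, let X(s,u) ∈ Matrix (Fin 2) (Fin 2) ℂ solve ∂ₛX(s,u) = X(s,u)·[[0, u·f(s)],[g(s), 0]] with X(0,u) = Id, and set τ(u) = (1/2)·trace X(1,u). Define the iterated integrals I₀ = ∫₀¹ f(s) ds, I₁ = ∫₀¹ f(s)·(∫₀ˢ g(v) dv) ds, I₂ = ∫₀¹ g(s)·(∫₀ˢ f(u)·(∫₀ᵘ g(v) dv) du) ds. Assume: (i) X is twice continuously differentiable jointly in (s,u) and det X(s,u) = 1 for all s, u; (ii) ∫₀¹ g(s) ds = 0; (iii) τ(u) is real for every real u; (iv) I₀·I₂ + I₁² is a (negative) real number, i.e. Im(I₀·I₂ + I₁²) = 0 and Re(I₀·I₂ + I₁²) < 0. Then there exists c₀ > 0 such that for every real c with 0 < |c| < c₀ and every λ ∈ ℂ with |λ| = 1 and λ ≠ 1, one has |τ(c·λ⁻¹(λ−1)²)| < 1. -/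

import Mathlib

attribute [local instance] Matrix.normedAddCommGroup Matrix.normedSpace

open MeasureTheory Set intervalIntegral

namespace HTB

lemma mem_uIcc01 {t : ℝ} (ht : t ∈ Icc (0:ℝ) 1) : uIcc (0:ℝ) t ⊆ Icc 0 1 := by
  rw [uIcc_of_le ht.1]
  exact Icc_subset_Icc le_rfl ht.2

lemma integrable01 {w : ℝ → ℂ} (hw : ContinuousOn w (Icc 0 1)) {t : ℝ}
    (ht : t ∈ Icc (0:ℝ) 1) : IntervalIntegrable w volume 0 t :=
  (hw.mono (mem_uIcc01 ht)).intervalIntegrable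

lemma primitive_cont {w : ℝ → ℂ} (hw : ContinuousOn w (Icc 0 1)) :
    ContinuousOn (fun t => ∫ v in (0:ℝ)..t, w v) (Icc 0 1) := by
  have : IntegrableOn w (uIcc (0:ℝ) 1) := by
    rw [uIcc_of_le zero_le_one]
    exact hw.integrableOn_Icc
  simpa [uIcc_of_le (zero_le_one : (0:ℝ) ≤ 1)] using continuousOn_primitive_interval this

lemma primitive_hasDerivAt {w : ℝ → ℂ} (hw : ContinuousOn w (Icc 0 1)) {x : ℝ}
    (hx : x ∈ Ioo (0:ℝ) 1) :
    HasDerivAt (fun t => ∫ v in (0:ℝ)..t, w v) (w x) x := by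
  have h1 : ContinuousOn w (Ioo 0 1) := hw.mono Ioo_subset_Icc_self
  have hn : Ioo (0:ℝ) 1 ∈ nhds x := Ioo_mem_nhds hx.1 hx.2
  exact integral_hasDerivAt_right (integrable01 hw (Ioo_subset_Icc_self hx))
    (h1.stronglyMeasurableAtFilter isOpen_Ioo x hx)
    (h1.continuousAt hn)

lemma ftc2 {h h' : ℝ → ℂ} (hc : ContinuousOn h (Icc 0 1))
    (hd : ∀ x ∈ Ioo (0:ℝ) 1, HasDerivAt h (h' x) x)
    (hc' : ContinuousOn h' (Icc 0 1)) {t : ℝ} (ht : t ∈ Icc (0:ℝ) 1) :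
    ∫ v in (0:ℝ)..t, h' v = h t - h 0 := by
  apply integral_eq_sub_of_hasDeriv_right_of_le ht.1
    (hc.mono (Icc_subset_Icc le_rfl ht.2))
    (fun x hx => ((hd x ⟨hx.1, lt_of_lt_of_le hx.2 ht.2⟩).hasDerivWithinAt))
    (integrable01 hc' ht)

lemma int_bound {w : ℝ → ℂ} {C : ℝ} (hC : 0 ≤ C)
    (hw : ∀ s ∈ Icc (0:ℝ) 1, ‖w s‖ ≤ C)
    {t : ℝ} (ht : t ∈ Icc (0:ℝ) 1) : ‖∫ v in (0:ℝ)..t, w v‖ ≤ C := by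
  have h1 : ‖∫ v in (0:ℝ)..t, w v‖ ≤ C * |t - 0| := by
    apply intervalIntegral.norm_integral_le_of_norm_le_const
    intro x hx
    have : x ∈ Icc (0:ℝ) 1 := by
      apply mem_uIcc01 ht
      exact uIoc_subset_uIcc hx
    simpa using hw x this
  calc ‖∫ v in (0:ℝ)..t, w v‖ ≤ C * |t - 0| := h1
    _ ≤ C * 1 := by
        apply mul_le_mul_of_nonneg_left _ hC
        rw [sub_zero, abs_of_nonneg ht.1]
        exact ht.2
    _ = C := mul_one C

noncomputable def E (i j : Fin 2) : Matrix (Fin 2) (Fin 2) ℂ →L[ℝ] ℂ :=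
  LinearMap.toContinuousLinearMap ((Matrix.entryLinearMap ℂ ℂ i j).restrictScalars ℝ)

@[simp] lemma E_apply (i j : Fin 2) (A : Matrix (Fin 2) (Fin 2) ℂ) : E i j A = A i j := rfl

lemma entry_hasDerivWithinAt {Y : ℝ → Matrix (Fin 2) (Fin 2) ℂ}
    {Y' : Matrix (Fin 2) (Fin 2) ℂ} {s : Set ℝ} {x : ℝ}
    (h : HasDerivWithinAt Y Y' s x) (i j : Fin 2) :
    HasDerivWithinAt (fun t => Y t i j) (Y' i j) s x := by
  have := (E i j).hasFDerivAt.comp_hasDerivWithinAt x h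
  exact this

lemma habs_mul {x y : ℂ} {aa bb : ℝ} (hx : ‖x‖ ≤ aa) (hy : ‖y‖ ≤ bb)
    (ha : 0 ≤ aa) : ‖x*y‖ ≤ aa*bb := by
  rw [norm_mul]; exact mul_le_mul hx hy (norm_nonneg y) ha

lemma habs_add {x y : ℂ} {aa bb : ℝ} (hx : ‖x‖ ≤ aa) (hy : ‖y‖ ≤ bb) :
    ‖x+y‖ ≤ aa + bb :=
  le_trans (norm_add_le x y) (add_le_add hx hy)

lemma habs_sub {x y : ℂ} {aa bb : ℝ} (hx : ‖x‖ ≤ aa) (hy : ‖y‖ ≤ bb) :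
    ‖x-y‖ ≤ aa + bb := by
  rw [sub_eq_add_neg]
  exact habs_add hx (by rwa [norm_neg])

lemma expansion (m11 m12 m21 m22 h1 h2 : ℝ → ℂ) (u c1 c2 : ℂ) (B₁ BD : ℝ)
    (hB₁0 : 0 ≤ B₁) (hBD0 : 0 ≤ BD)
    (hm11c : ContinuousOn m11 (Icc 0 1)) (hm12c : ContinuousOn m12 (Icc 0 1))
    (hm21c : ContinuousOn m21 (Icc 0 1)) (hm22c : ContinuousOn m22 (Icc 0 1))
    (hm11b : ∀ s ∈ Icc (0:ℝ) 1, ‖m11 s‖ ≤ B₁)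
    (hm12b : ∀ s ∈ Icc (0:ℝ) 1, ‖m12 s‖ ≤ B₁)
    (hm21b : ∀ s ∈ Icc (0:ℝ) 1, ‖m21 s‖ ≤ B₁)
    (hm22b : ∀ s ∈ Icc (0:ℝ) 1, ‖m22 s‖ ≤ B₁)
    (h1c : ContinuousOn h1 (Icc 0 1)) (h2c : ContinuousOn h2 (Icc 0 1))
    (h1b : ∀ s ∈ Icc (0:ℝ) 1, ‖h1 s‖ ≤ BD)
    (h2b : ∀ s ∈ Icc (0:ℝ) 1, ‖h2 s‖ ≤ BD)
    (hv1 : ∀ r ∈ Icc (0:ℝ) 1, h1 r = c1 + u * ∫ v in (0:ℝ)..r, (m11 v * h1 v + m21 v * h2 v))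
    (hv2 : ∀ r ∈ Icc (0:ℝ) 1, h2 r = c2 + u * ∫ v in (0:ℝ)..r, (m12 v * h1 v + m22 v * h2 v)) :
    ‖h1 1 - (c1 + u * (∫ v in (0:ℝ)..1, (m11 v * c1 + m21 v * c2))
      + u^2 * ∫ r in (0:ℝ)..1, (m11 r * (∫ v in (0:ℝ)..r, (m11 v * c1 + m21 v * c2))
        + m21 r * (∫ v in (0:ℝ)..r, (m12 v * c1 + m22 v * c2))))‖
      ≤ 8*B₁^3*BD*(‖u‖)^3 := by
  have h11 : (1:ℝ) ∈ Icc (0:ℝ) 1 := ⟨zero_le_one, le_rfl⟩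
  set wA : ℝ → ℂ := fun v => m11 v * h1 v + m21 v * h2 v with hwA
  set wB : ℝ → ℂ := fun v => m12 v * h1 v + m22 v * h2 v with hwB
  set k1 : ℝ → ℂ := fun v => m11 v * c1 + m21 v * c2 with hk1
  set k2 : ℝ → ℂ := fun v => m12 v * c1 + m22 v * c2 with hk2
  have hwAc : ContinuousOn wA (Icc 0 1) := (hm11c.mul h1c).add (hm21c.mul h2c)
  have hwBc : ContinuousOn wB (Icc 0 1) := (hm12c.mul h1c).add (hm22c.mul h2c)
  have hk1c : ContinuousOn k1 (Icc 0 1) :=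
    (hm11c.mul continuousOn_const).add (hm21c.mul continuousOn_const)
  have hk2c : ContinuousOn k2 (Icc 0 1) :=
    (hm12c.mul continuousOn_const).add (hm22c.mul continuousOn_const)
  have hwAb : ∀ s ∈ Icc (0:ℝ) 1, ‖wA s‖ ≤ 2*B₁*BD := by
    intro s hs
    calc ‖wA s‖ ≤ B₁*BD + B₁*BD :=
          habs_add (habs_mul (hm11b s hs) (h1b s hs) hB₁0)
            (habs_mul (hm21b s hs) (h2b s hs) hB₁0)
      _ = 2*B₁*BD := by ring
  have hwBb : ∀ s ∈ Icc (0:ℝ) 1, ‖wB s‖ ≤ 2*B₁*BD := by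
    intro s hs
    calc ‖wB s‖ ≤ B₁*BD + B₁*BD :=
          habs_add (habs_mul (hm12b s hs) (h1b s hs) hB₁0)
            (habs_mul (hm22b s hs) (h2b s hs) hB₁0)
      _ = 2*B₁*BD := by ring
  have hPA : ∀ r ∈ Icc (0:ℝ) 1, ‖∫ v in (0:ℝ)..r, wA v‖ ≤ 2*B₁*BD :=
    fun r hr => int_bound (by positivity) hwAb hr
  have hPB : ∀ r ∈ Icc (0:ℝ) 1, ‖∫ v in (0:ℝ)..r, wB v‖ ≤ 2*B₁*BD :=
    fun r hr => int_bound (by positivity) hwBb hr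
  have hd1 : ∀ s ∈ Icc (0:ℝ) 1, ‖h1 s - c1‖ ≤ ‖u‖ * (2*B₁*BD) := by
    intro s hs
    rw [hv1 s hs, add_sub_cancel_left, norm_mul]
    exact mul_le_mul le_rfl (hPA s hs) (norm_nonneg _) (norm_nonneg u)
  have hd2 : ∀ s ∈ Icc (0:ℝ) 1, ‖h2 s - c2‖ ≤ ‖u‖ * (2*B₁*BD) := by
    intro s hs
    rw [hv2 s hs, add_sub_cancel_left, norm_mul]
    exact mul_le_mul le_rfl (hPB s hs) (norm_nonneg _) (norm_nonneg u)
  -- deviation of the primitives from the constant-coefficient primitives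
  have hdevA : ∀ r ∈ Icc (0:ℝ) 1,
      ‖(∫ v in (0:ℝ)..r, wA v) - ∫ v in (0:ℝ)..r, k1 v‖
        ≤ ‖u‖ * (4*B₁^2*BD) := by
    intro r hr
    rw [← intervalIntegral.integral_sub (integrable01 hwAc hr) (integrable01 hk1c hr)]
    apply int_bound (by positivity) _ hr
    intro v hv
    have he : wA v - k1 v = m11 v * (h1 v - c1) + m21 v * (h2 v - c2) := by
      have e1 : wA v = m11 v * h1 v + m21 v * h2 v := rfl
      have e2 : k1 v = m11 v * c1 + m21 v * c2 := rfl
      rw [e1, e2]; ring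
    rw [he]
    calc ‖m11 v * (h1 v - c1) + m21 v * (h2 v - c2)‖
        ≤ B₁*(‖u‖ * (2*B₁*BD)) + B₁*(‖u‖ * (2*B₁*BD)) :=
          habs_add (habs_mul (hm11b v hv) (hd1 v hv) hB₁0)
            (habs_mul (hm21b v hv) (hd2 v hv) hB₁0)
      _ = ‖u‖ * (4*B₁^2*BD) := by ring
  have hdevB : ∀ r ∈ Icc (0:ℝ) 1,
      ‖(∫ v in (0:ℝ)..r, wB v) - ∫ v in (0:ℝ)..r, k2 v‖
        ≤ ‖u‖ * (4*B₁^2*BD) := by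
    intro r hr
    rw [← intervalIntegral.integral_sub (integrable01 hwBc hr) (integrable01 hk2c hr)]
    apply int_bound (by positivity) _ hr
    intro v hv
    have he : wB v - k2 v = m12 v * (h1 v - c1) + m22 v * (h2 v - c2) := by
      have e1 : wB v = m12 v * h1 v + m22 v * h2 v := rfl
      have e2 : k2 v = m12 v * c1 + m22 v * c2 := rfl
      rw [e1, e2]; ring
    rw [he]
    calc ‖m12 v * (h1 v - c1) + m22 v * (h2 v - c2)‖
        ≤ B₁*(‖u‖ * (2*B₁*BD)) + B₁*(‖u‖ * (2*B₁*BD)) :=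
          habs_add (habs_mul (hm12b v hv) (hd1 v hv) hB₁0)
            (habs_mul (hm22b v hv) (hd2 v hv) hB₁0)
      _ = ‖u‖ * (4*B₁^2*BD) := by ring
  -- continuity of primitives
  have hprimAc : ContinuousOn (fun r => ∫ v in (0:ℝ)..r, wA v) (Icc 0 1) := primitive_cont hwAc
  have hprimBc : ContinuousOn (fun r => ∫ v in (0:ℝ)..r, wB v) (Icc 0 1) := primitive_cont hwBc
  -- the first substitution
  have hint1 : (∫ v in (0:ℝ)..1, wA v) = (∫ v in (0:ℝ)..1, k1 v)
      + u * ∫ r in (0:ℝ)..1, (m11 r * (∫ v in (0:ℝ)..r, wA v) + m21 r * (∫ v in (0:ℝ)..r, wB v)) := by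
    have hcong : ∀ v ∈ Icc (0:ℝ) 1,
        wA v = k1 v + u * (m11 v * (∫ x in (0:ℝ)..v, wA x) + m21 v * (∫ x in (0:ℝ)..v, wB x)) := by
      intro v hv
      have e1 : wA v = m11 v * h1 v + m21 v * h2 v := rfl
      have e2 : k1 v = m11 v * c1 + m21 v * c2 := rfl
      rw [e1, e2, hv1 v hv, hv2 v hv]
      ring
    have hcong' : EqOn wA (fun v => k1 v + u * (m11 v * (∫ x in (0:ℝ)..v, wA x)
        + m21 v * (∫ x in (0:ℝ)..v, wB x))) (uIcc 0 1) := by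
      intro v hv
      exact hcong v (by rwa [uIcc_of_le zero_le_one] at hv)
    rw [intervalIntegral.integral_congr hcong']
    rw [intervalIntegral.integral_add (integrable01 hk1c h11)
      (by
        apply ContinuousOn.intervalIntegrable
        apply ContinuousOn.mono _ (mem_uIcc01 h11)
        exact (continuousOn_const.mul ((hm11c.mul hprimAc).add (hm21c.mul hprimBc)) : _))]
    rw [intervalIntegral.integral_const_mul]
  -- final computation
  have hmodel : h1 1 - (c1 + u * (∫ v in (0:ℝ)..1, k1 v)
      + u^2 * ∫ r in (0:ℝ)..1, (m11 r * (∫ v in (0:ℝ)..r, k1 v) + m21 r * (∫ v in (0:ℝ)..r, k2 v)))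
      = u^2 * ∫ r in (0:ℝ)..1, (m11 r * ((∫ v in (0:ℝ)..r, wA v) - ∫ v in (0:ℝ)..r, k1 v)
        + m21 r * ((∫ v in (0:ℝ)..r, wB v) - ∫ v in (0:ℝ)..r, k2 v)) := by
    rw [hv1 1 h11, hint1]
    have hsub : (∫ r in (0:ℝ)..1, (m11 r * ((∫ v in (0:ℝ)..r, wA v) - ∫ v in (0:ℝ)..r, k1 v)
        + m21 r * ((∫ v in (0:ℝ)..r, wB v) - ∫ v in (0:ℝ)..r, k2 v)))
        = (∫ r in (0:ℝ)..1, (m11 r * (∫ v in (0:ℝ)..r, wA v) + m21 r * (∫ v in (0:ℝ)..r, wB v)))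
          - ∫ r in (0:ℝ)..1, (m11 r * (∫ v in (0:ℝ)..r, k1 v) + m21 r * (∫ v in (0:ℝ)..r, k2 v)) := by
      rw [← intervalIntegral.integral_sub
        (f := fun r => m11 r * (∫ v in (0:ℝ)..r, wA v) + m21 r * (∫ v in (0:ℝ)..r, wB v))
        (g := fun r => m11 r * (∫ v in (0:ℝ)..r, k1 v) + m21 r * (∫ v in (0:ℝ)..r, k2 v))
        (integrable01 ((hm11c.mul hprimAc).add (hm21c.mul hprimBc)) h11)
        (integrable01 ((hm11c.mul (primitive_cont hk1c)).add (hm21c.mul (primitive_cont hk2c))) h11)]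
      congr 1
      funext r
      ring
    rw [hsub]
    ring
  rw [hmodel, norm_mul, norm_pow]
  have hfin : ‖∫ r in (0:ℝ)..1, (m11 r * ((∫ v in (0:ℝ)..r, wA v) - ∫ v in (0:ℝ)..r, k1 v)
      + m21 r * ((∫ v in (0:ℝ)..r, wB v) - ∫ v in (0:ℝ)..r, k2 v))‖
      ≤ ‖u‖ * (8*B₁^3*BD) := by
    apply int_bound (by positivity) _ h11
    intro r hr
    calc ‖m11 r * ((∫ v in (0:ℝ)..r, wA v) - ∫ v in (0:ℝ)..r, k1 v)
        + m21 r * ((∫ v in (0:ℝ)..r, wB v) - ∫ v in (0:ℝ)..r, k2 v)‖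
        ≤ B₁*(‖u‖ * (4*B₁^2*BD)) + B₁*(‖u‖ * (4*B₁^2*BD)) :=
          habs_add (habs_mul (hm11b r hr) (hdevA r hr) hB₁0)
            (habs_mul (hm21b r hr) (hdevB r hr) hB₁0)
      _ = ‖u‖ * (8*B₁^3*BD) := by ring
  calc ‖u‖ ^ 2 * ‖∫ r in (0:ℝ)..1,
        (m11 r * ((∫ v in (0:ℝ)..r, wA v) - ∫ v in (0:ℝ)..r, k1 v)
        + m21 r * ((∫ v in (0:ℝ)..r, wB v) - ∫ v in (0:ℝ)..r, k2 v))‖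
      ≤ ‖u‖ ^ 2 * (‖u‖ * (8*B₁^3*BD)) := by
        apply mul_le_mul_of_nonneg_left hfin (by positivity)
    _ = 8*B₁^3*BD*(‖u‖)^3 := by ring

end HTB


set_option maxHeartbeats 2000000 in
/-- Lemma 2.5: under the stated hypotheses on the monodromy half-trace
`τ(u) = (1/2)·tr X(1,u)` and the iterated integrals `I₀, I₁, I₂` with
`I₀I₂ + I₁² < 0`, there exists `c₀ > 0` such that for all real `c` with `0 < |c| < c₀`
and all `λ ∈ S¹ \ {1}` one has `|τ(c·λ⁻¹(λ−1)²)| < 1`. -/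
theorem half_trace_bound (f g : ℝ → ℂ)
    (hf : ContinuousOn f (Set.Icc 0 1)) (hg : ContinuousOn g (Set.Icc 0 1))
    (X : ℝ × ℂ → Matrix (Fin 2) (Fin 2) ℂ)
    (hX : ContDiffOn ℝ 2 X (Set.Icc (0:ℝ) 1 ×ˢ Set.univ))
    (hode : ∀ u : ℂ, ∀ s ∈ Set.Icc (0:ℝ) 1,
      HasDerivWithinAt (fun s' => X (s', u)) (X (s, u) * !![0, u * f s; g s, 0])
        (Set.Icc (0:ℝ) 1) s)
    (hinit : ∀ u : ℂ, X (0, u) = 1)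
    (hdet : ∀ u : ℂ, ∀ s ∈ Set.Icc (0:ℝ) 1, (X (s, u)).det = 1)
    (τ : ℂ → ℂ) (hτ : τ = fun u => (1 / 2 : ℂ) * (X (1, u)).trace)
    (hgint : (∫ s in (0:ℝ)..1, g s) = 0)
    (hreal : ∀ u : ℝ, (τ (u : ℂ)).im = 0)
    (I₀ I₁ I₂ : ℂ)
    (hI₀ : I₀ = ∫ s in (0:ℝ)..1, f s)
    (hI₁ : I₁ = ∫ s in (0:ℝ)..1, f s * ∫ v in (0:ℝ)..s, g v)
    (hI₂ : I₂ = ∫ s in (0:ℝ)..1, g s * ∫ u in (0:ℝ)..s, f u * ∫ v in (0:ℝ)..u, g v)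
    (hIm : (I₀ * I₂ + I₁ ^ 2).im = 0) (hRe : (I₀ * I₂ + I₁ ^ 2).re < 0) :
    ∃ c₀ > (0:ℝ), ∀ c : ℝ, 0 < |c| → |c| < c₀ →
      ∀ l : ℂ, ‖l‖ = 1 → l ≠ 1 →
        ‖τ ((c : ℂ) * (l⁻¹ * (l - 1) ^ 2))‖ < 1 := by
  -- the remainder constant
  obtain ⟨C₃, hC₃0, key⟩ :
      ∃ C₃ : ℝ, 0 ≤ C₃ ∧ ∀ u : ℂ, ‖u‖ ≤ 1 →
        ‖τ u - (1 + u^2 * ((I₀ * I₂ + I₁ ^ 2)/2))‖ ≤ C₃ * (‖u‖)^3 := by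
    have h01 : (0:ℝ) ∈ Icc (0:ℝ) 1 := ⟨le_rfl, zero_le_one⟩
    have h11 : (1:ℝ) ∈ Icc (0:ℝ) 1 := ⟨zero_le_one, le_rfl⟩
    obtain ⟨Cf, hCf0, hCf⟩ : ∃ C : ℝ, 0 ≤ C ∧ ∀ s ∈ Icc (0:ℝ) 1, ‖f s‖ ≤ C := by
      obtain ⟨C, hC⟩ := isCompact_Icc.exists_bound_of_continuousOn hf
      exact ⟨max C 0, le_max_right _ _, fun s hs =>
        le_trans (by simpa using hC s hs) (le_max_left _ _)⟩
    obtain ⟨Cg, hCg0, hCg⟩ : ∃ C : ℝ, 0 ≤ C ∧ ∀ s ∈ Icc (0:ℝ) 1, ‖g s‖ ≤ C := by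
      obtain ⟨C, hC⟩ := isCompact_Icc.exists_bound_of_continuousOn hg
      exact ⟨max C 0, le_max_right _ _, fun s hs =>
        le_trans (by simpa using hC s hs) (le_max_left _ _)⟩
    obtain ⟨B, hB0, hB⟩ : ∃ B : ℝ, 0 ≤ B ∧ ∀ s ∈ Icc (0:ℝ) 1, ∀ u : ℂ, ‖u‖ ≤ 1 →
        ∀ i j : Fin 2, ‖X (s, u) i j‖ ≤ B := by
      have hK : IsCompact (Icc (0:ℝ) 1 ×ˢ Metric.closedBall (0:ℂ) 1) :=
        isCompact_Icc.prod (isCompact_closedBall 0 1)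
      have hXc : ContinuousOn X (Icc (0:ℝ) 1 ×ˢ Metric.closedBall (0:ℂ) 1) :=
        (hX.continuousOn).mono (fun x hx => ⟨hx.1, mem_univ _⟩)
      obtain ⟨C, hC⟩ := hK.exists_bound_of_continuousOn hXc
      refine ⟨max C 0, le_max_right _ _, fun s hs u hu i j => ?_⟩
      have hm : (s, u) ∈ Icc (0:ℝ) 1 ×ˢ Metric.closedBall (0:ℂ) 1 :=
        ⟨hs, by simpa [Metric.mem_closedBall, Complex.dist_eq] using hu⟩
      have h2 : ‖X (s,u) i j‖ ≤ ‖X (s,u)‖ := Matrix.norm_entry_le_entrywise_sup_norm (X (s,u))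
      exact le_trans h2 (le_trans (hC (s,u) hm) (le_max_left _ _))
    -- basic functions
    set G : ℝ → ℂ := fun r => ∫ v in (0:ℝ)..r, g v with hGdef
    have hGc : ContinuousOn G (Icc 0 1) := HTB.primitive_cont hg
    have hGd : ∀ x ∈ Ioo (0:ℝ) 1, HasDerivAt G (g x) x := fun x hx => HTB.primitive_hasDerivAt hg hx
    have hGb : ∀ r ∈ Icc (0:ℝ) 1, ‖G r‖ ≤ Cg := fun r hr => HTB.int_bound hCg0 hCg hr
    have hG1 : G 1 = 0 := hgint
    have hG0 : G 0 = 0 := intervalIntegral.integral_same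
    have hfGc : ContinuousOn (fun v => f v * G v) (Icc 0 1) := hf.mul hGc
    have hfG2c : ContinuousOn (fun v => f v * (G v)^2) (Icc 0 1) := hf.mul (hGc.pow 2)
    set A : ℝ → ℂ := fun r => ∫ v in (0:ℝ)..r, f v with hAdef
    set b : ℝ → ℂ := fun r => ∫ v in (0:ℝ)..r, f v * G v with hbdef
    set P : ℝ → ℂ := fun r => ∫ v in (0:ℝ)..r, f v * (G v)^2 with hPdef
    have hAc : ContinuousOn A (Icc 0 1) := HTB.primitive_cont hf
    have hbc : ContinuousOn b (Icc 0 1) := HTB.primitive_cont hfGc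
    have hPc : ContinuousOn P (Icc 0 1) := HTB.primitive_cont hfG2c
    have hAd : ∀ x ∈ Ioo (0:ℝ) 1, HasDerivAt A (f x) x := fun x hx => HTB.primitive_hasDerivAt hf hx
    have hbd : ∀ x ∈ Ioo (0:ℝ) 1, HasDerivAt b (f x * G x) x :=
      fun x hx => HTB.primitive_hasDerivAt hfGc hx
    have hPd : ∀ x ∈ Ioo (0:ℝ) 1, HasDerivAt P (f x * (G x)^2) x :=
      fun x hx => HTB.primitive_hasDerivAt hfG2c hx
    have hA0 : A 0 = 0 := intervalIntegral.integral_same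
    have hb0 : b 0 = 0 := intervalIntegral.integral_same
    have hP0 : P 0 = 0 := intervalIntegral.integral_same
    set Q₁ : ℂ := ∫ r in (0:ℝ)..1, (f r * G r * b r - f r * (G r)^2 * A r) with hQ₁def
    set Q₂ : ℂ := ∫ r in (0:ℝ)..1, (f r * G r * b r - f r * P r) with hQ₂def
    -- the three FTC identities
    have i1 : (∫ r in (0:ℝ)..1, (2*(f r * G r) * b r)) = b 1 ^ 2 := by
      have h2 := HTB.ftc2 (h := fun r => b r ^ 2) (h' := fun r => 2*(f r * G r) * b r)
        (hbc.pow 2)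
        (fun x hx => by
          have h3 := (hbd x hx).mul (hbd x hx)
          have e : (fun r => b r ^ 2) = fun r => b r * b r := by funext r; ring
          rw [e]
          exact h3.congr_deriv (by ring))
        ((continuousOn_const.mul hfGc).mul hbc) h11
      beta_reduce at h2
      rw [h2, hb0]
      ring
    have i2 : (∫ r in (0:ℝ)..1, (f r * (G r)^2 * A r + f r * P r)) = A 1 * P 1 := by
      have h2 := HTB.ftc2 (h := fun r => A r * P r) (h' := fun r => f r * (G r)^2 * A r + f r * P r)
        (hAc.mul hPc)
        (fun x hx => by
          have h3 := (hAd x hx).mul (hPd x hx)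
          exact h3.congr_deriv (by ring))
        ((hfG2c.mul hAc).add (hf.mul hPc)) h11
      beta_reduce at h2
      rw [h2, hA0, hP0]
      ring
    have i3 : (∫ r in (0:ℝ)..1, (g r * b r + f r * (G r)^2)) = 0 := by
      have h2 := HTB.ftc2 (h := fun r => G r * b r) (h' := fun r => g r * b r + f r * (G r)^2)
        (hGc.mul hbc)
        (fun x hx => by
          have h3 := (hGd x hx).mul (hbd x hx)
          exact h3.congr_deriv (by ring))
        ((hg.mul hbc).add hfG2c) h11
      beta_reduce at h2
      rw [h2, hG1, hG0]
      ring
    -- identification with the iterated integrals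
    have hA1 : A 1 = I₀ := hI₀.symm
    have hb1 : b 1 = I₁ := hI₁.symm
    have hI₂' : I₂ = -(P 1) := by
      have h2 : (∫ r in (0:ℝ)..1, (g r * b r + f r * (G r)^2))
          = (∫ r in (0:ℝ)..1, g r * b r) + ∫ r in (0:ℝ)..1, f r * (G r)^2 :=
        intervalIntegral.integral_add (HTB.integrable01 (hg.mul hbc) h11)
          (HTB.integrable01 hfG2c h11)
      rw [i3] at h2
      have h3 : I₂ = ∫ r in (0:ℝ)..1, g r * b r := hI₂
      have h4 : P 1 = ∫ r in (0:ℝ)..1, f r * (G r)^2 := rfl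
      rw [h3, h4]
      linear_combination -h2
    have hQ : Q₁ + Q₂ = I₀ * I₂ + I₁ ^ 2 := by
      have hsum : Q₁ + Q₂ = ∫ r in (0:ℝ)..1,
          ((f r * G r * b r - f r * (G r)^2 * A r) + (f r * G r * b r - f r * P r)) :=
        (intervalIntegral.integral_add
          (HTB.integrable01 ((hfGc.mul hbc).sub ((hfG2c).mul hAc)) h11)
          (HTB.integrable01 ((hfGc.mul hbc).sub (hf.mul hPc)) h11)).symm
      have e : (fun r => (f r * G r * b r - f r * (G r)^2 * A r) + (f r * G r * b r - f r * P r))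
          = fun r => (2*(f r * G r) * b r) - (f r * (G r)^2 * A r + f r * P r) := by
        funext r; ring
      rw [e] at hsum
      rw [intervalIntegral.integral_sub
        (f := fun r => 2*(f r * G r) * b r) (g := fun r => f r * (G r)^2 * A r + f r * P r)
        (HTB.integrable01 ((continuousOn_const.mul hfGc).mul hbc) h11)
        (HTB.integrable01 ((hfG2c.mul hAc).add (hf.mul hPc)) h11), i1, i2] at hsum
      rw [hsum, hb1, hA1, hI₂']
      ring
    -- the constant
    refine ⟨8*(Cf*(1+Cg)^2)^3*(B*(1+Cg)), by positivity, ?_⟩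
    intro u hu
    -- entrywise facts about X(·, u)
    have hXcs : ContinuousOn (fun r : ℝ => X (r, u)) (Icc 0 1) :=
      ContinuousOn.comp hX.continuousOn
        ((continuous_id.prodMk continuous_const).continuousOn)
        (fun r hr => ⟨hr, mem_univ _⟩)
    have hEc : ∀ i j : Fin 2, ContinuousOn (fun r => X (r,u) i j) (Icc (0:ℝ) 1) :=
      fun i j => (HTB.E i j).continuous.comp_continuousOn hXcs
    have hEb : ∀ (i j : Fin 2), ∀ s ∈ Icc (0:ℝ) 1, ‖X (s,u) i j‖ ≤ B :=
      fun i j s hs => hB s hs u hu i j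
    have hder : ∀ i j : Fin 2, ∀ x ∈ Ioo (0:ℝ) 1, HasDerivAt (fun r => X (r,u) i j)
        ((X (x,u) * !![0, u*f x; g x, 0]) i j) x := fun i j x hx =>
      (HTB.entry_hasDerivWithinAt (hode u x (Ioo_subset_Icc_self hx)) i j).hasDerivAt
        (Icc_mem_nhds hx.1 hx.2)
    have hm00 : ∀ x : ℝ, (X (x,u) * !![0, u*f x; g x, 0]) 0 0 = X (x,u) 0 1 * g x := by
      intro x; simp [Matrix.mul_apply, Fin.sum_univ_two]
    have hm01 : ∀ x : ℝ, (X (x,u) * !![0, u*f x; g x, 0]) 0 1 = X (x,u) 0 0 * (u * f x) := by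
      intro x; simp [Matrix.mul_apply, Fin.sum_univ_two]
    have hm10 : ∀ x : ℝ, (X (x,u) * !![0, u*f x; g x, 0]) 1 0 = X (x,u) 1 1 * g x := by
      intro x; simp [Matrix.mul_apply, Fin.sum_univ_two]
    have hm11e : ∀ x : ℝ, (X (x,u) * !![0, u*f x; g x, 0]) 1 1 = X (x,u) 1 0 * (u * f x) := by
      intro x; simp [Matrix.mul_apply, Fin.sum_univ_two]
    set d11 : ℝ → ℂ := fun r => X (r,u) 0 0 - G r * X (r,u) 0 1 with hd11def
    set d21 : ℝ → ℂ := fun r => X (r,u) 1 0 - G r * X (r,u) 1 1 with hd21def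
    have hd11c : ContinuousOn d11 (Icc 0 1) := (hEc 0 0).sub (hGc.mul (hEc 0 1))
    have hd21c : ContinuousOn d21 (Icc 0 1) := (hEc 1 0).sub (hGc.mul (hEc 1 1))
    -- derivatives of the gauged entries
    have hd11d : ∀ x ∈ Ioo (0:ℝ) 1, HasDerivAt d11
        (u * (-(f x * G x) * d11 x + -(f x * (G x)^2) * X (x, u) 0 1)) x := by
      intro x hx
      have h1 := (hder 0 0 x hx).sub ((hGd x hx).mul (hder 0 1 x hx))
      rw [hm00 x, hm01 x] at h1
      have e1 : d11 x = X (x,u) 0 0 - G x * X (x,u) 0 1 := rfl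
      have e2 : u * (-(f x * G x) * d11 x + -(f x * (G x)^2) * X (x, u) 0 1)
          = X (x,u) 0 1 * g x - (g x * X (x,u) 0 1 + G x * (X (x,u) 0 0 * (u * f x))) := by
        rw [e1]; ring
      rw [e2]
      exact h1
    have hd12d : ∀ x ∈ Ioo (0:ℝ) 1, HasDerivAt (fun r => X (r,u) 0 1)
        (u * (f x * d11 x + (f x * G x) * X (x, u) 0 1)) x := by
      intro x hx
      have h1 := hder 0 1 x hx
      rw [hm01 x] at h1
      have e1 : d11 x = X (x,u) 0 0 - G x * X (x,u) 0 1 := rfl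
      have e2 : u * (f x * d11 x + (f x * G x) * X (x, u) 0 1)
          = X (x,u) 0 0 * (u * f x) := by
        rw [e1]; ring
      rw [e2]
      exact h1
    have hd22d : ∀ x ∈ Ioo (0:ℝ) 1, HasDerivAt (fun r => X (r,u) 1 1)
        (u * ((f x * G x) * X (x, u) 1 1 + f x * d21 x)) x := by
      intro x hx
      have h1 := hder 1 1 x hx
      rw [hm11e x] at h1
      have e1 : d21 x = X (x,u) 1 0 - G x * X (x,u) 1 1 := rfl
      have e2 : u * ((f x * G x) * X (x, u) 1 1 + f x * d21 x)
          = X (x,u) 1 0 * (u * f x) := by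
        rw [e1]; ring
      rw [e2]
      exact h1
    have hd21d : ∀ x ∈ Ioo (0:ℝ) 1, HasDerivAt d21
        (u * (-(f x * (G x)^2) * X (x, u) 1 1 + -(f x * G x) * d21 x)) x := by
      intro x hx
      have h1 := (hder 1 0 x hx).sub ((hGd x hx).mul (hder 1 1 x hx))
      rw [hm10 x, hm11e x] at h1
      have e1 : d21 x = X (x,u) 1 0 - G x * X (x,u) 1 1 := rfl
      have e2 : u * (-(f x * (G x)^2) * X (x, u) 1 1 + -(f x * G x) * d21 x)
          = X (x,u) 1 1 * g x - (g x * X (x,u) 1 1 + G x * (X (x,u) 1 0 * (u * f x))) := by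
        rw [e1]; ring
      rw [e2]
      exact h1
    -- continuity of the vector fields
    have hw1c : ContinuousOn (fun x => u * (-(f x * G x) * d11 x
        + -(f x * (G x)^2) * X (x, u) 0 1)) (Icc 0 1) :=
      continuousOn_const.mul ((hfGc.neg.mul hd11c).add (hfG2c.neg.mul (hEc 0 1)))
    have hw2c : ContinuousOn (fun x => u * (f x * d11 x
        + (f x * G x) * X (x, u) 0 1)) (Icc 0 1) :=
      continuousOn_const.mul ((hf.mul hd11c).add (hfGc.mul (hEc 0 1)))
    have hw4c : ContinuousOn (fun x => u * ((f x * G x) * X (x, u) 1 1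
        + f x * d21 x)) (Icc 0 1) :=
      continuousOn_const.mul ((hfGc.mul (hEc 1 1)).add (hf.mul hd21c))
    have hw3c : ContinuousOn (fun x => u * (-(f x * (G x)^2) * X (x, u) 1 1
        + -(f x * G x) * d21 x)) (Icc 0 1) :=
      continuousOn_const.mul ((hfG2c.neg.mul (hEc 1 1)).add (hfGc.neg.mul hd21c))
    -- initial values
    have hini11 : d11 0 = 1 := by
      have e : d11 0 = X (0,u) 0 0 - G 0 * X (0,u) 0 1 := rfl
      rw [e, hinit u, hG0]
      simp
    have hini12 : X ((0:ℝ),u) 0 1 = 0 := by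
      rw [hinit u]
      simp [Matrix.one_apply]
    have hini22 : X ((0:ℝ),u) 1 1 = 1 := by
      rw [hinit u]
      simp
    have hini21 : d21 0 = 0 := by
      have e : d21 0 = X (0,u) 1 0 - G 0 * X (0,u) 1 1 := rfl
      rw [e, hinit u, hG0]
      simp [Matrix.one_apply]
    -- Volterra equations
    have hv1 : ∀ r ∈ Icc (0:ℝ) 1, d11 r = 1 + u * ∫ v in (0:ℝ)..r,
        (-(f v * G v) * d11 v + -(f v * (G v)^2) * X (v,u) 0 1) := by
      intro r hr
      have h2 := HTB.ftc2 (h := d11)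
        (h' := fun x => u * (-(f x * G x) * d11 x + -(f x * (G x)^2) * X (x, u) 0 1))
        hd11c hd11d hw1c hr
      beta_reduce at h2
      rw [intervalIntegral.integral_const_mul, hini11] at h2
      rw [h2]
      ring
    have hv2 : ∀ r ∈ Icc (0:ℝ) 1, X (r,u) 0 1 = 0 + u * ∫ v in (0:ℝ)..r,
        (f v * d11 v + (f v * G v) * X (v,u) 0 1) := by
      intro r hr
      have h2 := HTB.ftc2 (h := fun r => X (r,u) 0 1)
        (h' := fun x => u * (f x * d11 x + (f x * G x) * X (x, u) 0 1))
        (hEc 0 1) hd12d hw2c hr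
      beta_reduce at h2
      rw [intervalIntegral.integral_const_mul, hini12] at h2
      rw [h2]
      ring
    have hv4 : ∀ r ∈ Icc (0:ℝ) 1, X (r,u) 1 1 = 1 + u * ∫ v in (0:ℝ)..r,
        ((f v * G v) * X (v,u) 1 1 + f v * d21 v) := by
      intro r hr
      have h2 := HTB.ftc2 (h := fun r => X (r,u) 1 1)
        (h' := fun x => u * ((f x * G x) * X (x, u) 1 1 + f x * d21 x))
        (hEc 1 1) hd22d hw4c hr
      beta_reduce at h2
      rw [intervalIntegral.integral_const_mul, hini22] at h2
      rw [h2]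
      ring
    have hv3 : ∀ r ∈ Icc (0:ℝ) 1, d21 r = 0 + u * ∫ v in (0:ℝ)..r,
        (-(f v * (G v)^2) * X (v,u) 1 1 + -(f v * G v) * d21 v) := by
      intro r hr
      have h2 := HTB.ftc2 (h := d21)
        (h' := fun x => u * (-(f x * (G x)^2) * X (x, u) 1 1 + -(f x * G x) * d21 x))
        hd21c hd21d hw3c hr
      beta_reduce at h2
      rw [intervalIntegral.integral_const_mul, hini21] at h2
      rw [h2]
      ring
    -- bounds
    have hd11b : ∀ s ∈ Icc (0:ℝ) 1, ‖d11 s‖ ≤ B*(1+Cg) := by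
      intro s hs
      have e : d11 s = X (s,u) 0 0 - G s * X (s,u) 0 1 := rfl
      rw [e]
      calc ‖X (s,u) 0 0 - G s * X (s,u) 0 1‖ ≤ B + Cg*B :=
            HTB.habs_sub (hEb 0 0 s hs) (HTB.habs_mul (hGb s hs) (hEb 0 1 s hs) hCg0)
        _ = B*(1+Cg) := by ring
    have hd21b : ∀ s ∈ Icc (0:ℝ) 1, ‖d21 s‖ ≤ B*(1+Cg) := by
      intro s hs
      have e : d21 s = X (s,u) 1 0 - G s * X (s,u) 1 1 := rfl
      rw [e]
      calc ‖X (s,u) 1 0 - G s * X (s,u) 1 1‖ ≤ B + Cg*B :=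
            HTB.habs_sub (hEb 1 0 s hs) (HTB.habs_mul (hGb s hs) (hEb 1 1 s hs) hCg0)
        _ = B*(1+Cg) := by ring
    have hx12b : ∀ s ∈ Icc (0:ℝ) 1, ‖X (s,u) 0 1‖ ≤ B*(1+Cg) :=
      fun s hs => le_trans (hEb 0 1 s hs) (by nlinarith [mul_nonneg hB0 hCg0])
    have hx22b : ∀ s ∈ Icc (0:ℝ) 1, ‖X (s,u) 1 1‖ ≤ B*(1+Cg) :=
      fun s hs => le_trans (hEb 1 1 s hs) (by nlinarith [mul_nonneg hB0 hCg0])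
    -- coefficient bounds
    have hmfG : ∀ s ∈ Icc (0:ℝ) 1, ‖f s * G s‖ ≤ Cf*(1+Cg)^2 := by
      intro s hs
      calc ‖f s * G s‖ ≤ Cf * Cg := HTB.habs_mul (hCf s hs) (hGb s hs) hCf0
        _ ≤ Cf*(1+Cg)^2 := by nlinarith [mul_nonneg hCf0 hCg0, mul_nonneg (mul_nonneg hCf0 hCg0) hCg0]
    have hmnfG : ∀ s ∈ Icc (0:ℝ) 1, ‖-(f s * G s)‖ ≤ Cf*(1+Cg)^2 := by
      intro s hs
      rw [norm_neg]
      exact hmfG s hs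
    have hmf : ∀ s ∈ Icc (0:ℝ) 1, ‖f s‖ ≤ Cf*(1+Cg)^2 :=
      fun s hs => le_trans (hCf s hs) (by nlinarith [mul_nonneg hCf0 hCg0, mul_nonneg (mul_nonneg hCf0 hCg0) hCg0])
    have hmfG2 : ∀ s ∈ Icc (0:ℝ) 1, ‖-(f s * (G s)^2)‖ ≤ Cf*(1+Cg)^2 := by
      intro s hs
      rw [norm_neg]
      have h2 : ‖(G s)^2‖ ≤ Cg^2 := by
        rw [norm_pow]
        exact pow_le_pow_left₀ (norm_nonneg _) (hGb s hs) 2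
      calc ‖f s * (G s)^2‖ ≤ Cf * Cg^2 := HTB.habs_mul (hCf s hs) h2 hCf0
        _ ≤ Cf*(1+Cg)^2 := by nlinarith [mul_nonneg hCf0 hCg0, mul_nonneg (mul_nonneg hCf0 hCg0) hCg0]
    -- the two expansions
    have exp1 := HTB.expansion (fun v => -(f v * G v)) f (fun v => -(f v * (G v)^2))
      (fun v => f v * G v) d11 (fun r => X (r,u) 0 1) u 1 0 (Cf*(1+Cg)^2) (B*(1+Cg))
      (by positivity) (by positivity)
      hfGc.neg hf hfG2c.neg hfGc
      hmnfG hmf hmfG2 hmfG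
      hd11c (hEc 0 1) hd11b hx12b
      hv1 hv2
    have exp2 := HTB.expansion (fun v => f v * G v) (fun v => -(f v * (G v)^2)) f
      (fun v => -(f v * G v)) (fun r => X (r,u) 1 1) d21 u 1 0 (Cf*(1+Cg)^2) (B*(1+Cg))
      (by positivity) (by positivity)
      hfGc hfG2c.neg hf hfGc.neg
      hmfG hmfG2 hmf hmnfG
      (hEc 1 1) hd21c hx22b hd21b
      hv4 hv3
    beta_reduce at exp1 exp2
    -- clean up the models
    have eA : ∀ r : ℝ, (∫ v in (0:ℝ)..r, (-(f v * G v) * 1 + -(f v * (G v)^2) * 0)) = -(b r) := by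
      intro r
      rw [show (fun v => -(f v * G v) * (1:ℂ) + -(f v * (G v)^2) * 0) = fun v => -(f v * G v)
        from by funext v; ring]
      rw [intervalIntegral.integral_neg]
    have eB : ∀ r : ℝ, (∫ v in (0:ℝ)..r, (f v * 1 + f v * G v * 0)) = A r := by
      intro r
      rw [show (fun v => f v * (1:ℂ) + f v * G v * 0) = fun v => f v from by funext v; ring]
    have eC : ∀ r : ℝ, (∫ v in (0:ℝ)..r, (f v * G v * 1 + f v * 0)) = b r := by
      intro r
      rw [show (fun v => f v * G v * (1:ℂ) + f v * 0) = fun v => f v * G v from by funext v; ring]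
    have eD : ∀ r : ℝ, (∫ v in (0:ℝ)..r, (-(f v * (G v)^2) * 1 + -(f v * G v) * 0)) = -(P r) := by
      intro r
      rw [show (fun v => -(f v * (G v)^2) * (1:ℂ) + -(f v * G v) * 0) = fun v => -(f v * (G v)^2)
        from by funext v; ring]
      rw [intervalIntegral.integral_neg]
    rw [eA 1] at exp1
    rw [eC 1] at exp2
    have e2 : (fun r => -(f r * G r) * (∫ v in (0:ℝ)..r, (-(f v * G v) * 1 + -(f v * (G v)^2) * 0))
        + -(f r * (G r)^2) * (∫ v in (0:ℝ)..r, (f v * 1 + f v * G v * 0)))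
        = fun r => f r * G r * b r - f r * (G r)^2 * A r := by
      funext r
      rw [eA r, eB r]
      ring
    have e3 : (fun r => f r * G r * (∫ v in (0:ℝ)..r, (f v * G v * 1 + f v * 0))
        + f r * (∫ v in (0:ℝ)..r, (-(f v * (G v)^2) * 1 + -(f v * G v) * 0)))
        = fun r => f r * G r * b r - f r * P r := by
      funext r
      rw [eC r, eD r]
      ring
    rw [e2] at exp1
    rw [e3] at exp2
    -- assemble
    have htr : τ u = 1/2 * (d11 1 + X ((1:ℝ),u) 1 1) := by
      rw [hτ]
      have e : d11 1 = X ((1:ℝ),u) 0 0 - G 1 * X ((1:ℝ),u) 0 1 := rfl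
      rw [show (fun u => 1 / 2 * (X (1, u)).trace) u = 1/2 * (X ((1:ℝ),u)).trace from rfl]
      rw [Matrix.trace_fin_two, e, hG1]
      ring
    have hsplit : τ u - (1 + u^2*((I₀ * I₂ + I₁ ^ 2)/2))
        = 1/2 * ((d11 1 - (1 + u * -(b 1) + u^2 * Q₁))
          + (X ((1:ℝ),u) 1 1 - (1 + u * b 1 + u^2 * Q₂))) := by
      rw [htr, ← hQ, hQ₁def, hQ₂def]
      ring
    rw [hsplit, norm_mul]
    have habs12 : ‖(1/2 : ℂ)‖ = 1/2 := by
      simp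
    rw [habs12]
    have hQQ1 : (∫ r in (0:ℝ)..1, (f r * G r * b r - f r * (G r)^2 * A r)) = Q₁ := rfl
    have hQQ2 : (∫ r in (0:ℝ)..1, (f r * G r * b r - f r * P r)) = Q₂ := rfl
    rw [hQQ1] at exp1
    rw [hQQ2] at exp2
    calc (1:ℝ)/2 * ‖(d11 1 - (1 + u * -(b 1) + u^2 * Q₁))
          + (X ((1:ℝ),u) 1 1 - (1 + u * b 1 + u^2 * Q₂))‖
        ≤ 1/2 * (8*(Cf*(1+Cg)^2)^3*(B*(1+Cg))*(‖u‖)^3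
            + 8*(Cf*(1+Cg)^2)^3*(B*(1+Cg))*(‖u‖)^3) := by
          apply mul_le_mul_of_nonneg_left _ (by norm_num)
          exact HTB.habs_add exp1 exp2
      _ = 8*(Cf*(1+Cg)^2)^3*(B*(1+Cg))*(‖u‖)^3 := by ring
  set s0 : ℝ := -(I₀ * I₂ + I₁ ^ 2).re with hs0def
  have hs0 : 0 < s0 := by simp only [hs0def]; linarith
  have hSval : (I₀ * I₂ + I₁ ^ 2) = ((-s0 : ℝ) : ℂ) := by
    apply Complex.ext
    · simp [hs0def]
    · simp [hIm]
  refine ⟨min 1 (min (2/s0) (s0/(2*(C₃+1)))) / 4, by positivity, ?_⟩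
  intro c hc hc' l hl hl1
  have hl0 : l ≠ 0 := by
    intro h; rw [h] at hl; simp at hl
  have hconj : (starRingEnd ℂ) l * l = 1 := by
    rw [mul_comm, Complex.mul_conj, Complex.normSq_eq_norm_sq, hl]
    norm_num
  have hre1 : l.re < 1 := by
    rcases lt_or_eq_of_le (le_trans (Complex.re_le_norm l) (le_of_eq hl)) with h | h
    · exact h
    · exfalso; apply hl1
      have him : l.im = 0 := by
        have h2 : ‖l‖ ^ 2 = l.re^2 + l.im^2 := by
          rw [Complex.sq_norm, Complex.normSq_apply]; ring
        rw [hl] at h2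
        nlinarith [sq_nonneg l.im]
      apply Complex.ext <;> simp [h, him]
  have hrem1 : -1 ≤ l.re := by
    have := Complex.abs_re_le_norm l
    rw [hl] at this
    cases' abs_le.mp this with h1 h2
    exact h1
  set t : ℝ := 2*l.re - 2 with htdef
  have hlt : l⁻¹ * (l - 1)^2 = ((t : ℝ) : ℂ) := by
    have hinv : l⁻¹ = (starRingEnd ℂ) l := by
      apply inv_eq_of_mul_eq_one_right
      rw [mul_comm]; exact hconj
    rw [hinv]
    have h2 : ((t : ℝ) : ℂ) = l + (starRingEnd ℂ) l - 2 := by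
      rw [htdef]
      push_cast
      rw [Complex.add_conj]
      push_cast
      ring
    rw [h2]
    linear_combination (l - 2) * hconj
  have ht0 : t < 0 := by rw [htdef]; linarith
  have ht4 : |t| ≤ 4 := by rw [abs_le]; constructor <;> [skip; skip] <;> rw [htdef] <;> linarith
  set u : ℝ := c * t with hudef
  have hu0 : u ≠ 0 := mul_ne_zero (fun h => by simp [h] at hc) (ne_of_lt ht0)
  have huabs : |u| ≤ 4 * |c| := by
    rw [hudef, abs_mul]
    calc |c| * |t| ≤ |c| * 4 := by
          exact mul_le_mul_of_nonneg_left ht4 (abs_nonneg c)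
      _ = 4 * |c| := by ring
  have humin : |u| < min 1 (min (2/s0) (s0/(2*(C₃+1)))) := by
    calc |u| ≤ 4*|c| := huabs
      _ < 4 * (min 1 (min (2/s0) (s0/(2*(C₃+1)))) / 4) := by linarith
      _ = min 1 (min (2/s0) (s0/(2*(C₃+1)))) := by ring
  have hu1 : |u| ≤ 1 := le_of_lt (lt_of_lt_of_le humin (min_le_left _ _))
  have hu2 : |u| < 2/s0 := lt_of_lt_of_le humin (le_trans (min_le_right _ _) (min_le_left _ _))
  have hu3 : |u| < s0/(2*(C₃+1)) :=
    lt_of_lt_of_le humin (le_trans (min_le_right _ _) (min_le_right _ _))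
  -- rewrite the argument
  have harg : (c : ℂ) * (l⁻¹ * (l - 1)^2) = ((u : ℝ) : ℂ) := by
    rw [hlt, hudef]; push_cast; ring
  rw [harg]
  have hterm : (1 : ℂ) + ((u:ℝ):ℂ)^2 * ((I₀ * I₂ + I₁ ^ 2)/2) = ((1 - u^2*s0/2 : ℝ) : ℂ) := by
    rw [hSval]; push_cast; ring
  have habsu : ‖((u:ℝ):ℂ)‖ = |u| := by rw [Complex.norm_real, Real.norm_eq_abs]
  have hkey := key ((u:ℝ):ℂ) (by rw [habsu]; exact hu1)
  rw [hterm, habsu] at hkey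
  have hmain : ‖τ ((u:ℝ):ℂ)‖ ≤ |1 - u^2*s0/2| + C₃ * |u|^3 := by
    calc ‖τ ((u:ℝ):ℂ)‖
        = ‖((1 - u^2*s0/2 : ℝ):ℂ) + (τ ((u:ℝ):ℂ) - ((1 - u^2*s0/2 : ℝ):ℂ))‖ := by
          ring_nf
      _ ≤ ‖((1 - u^2*s0/2 : ℝ):ℂ)‖ + ‖τ ((u:ℝ):ℂ) - ((1 - u^2*s0/2 : ℝ):ℂ)‖ := by
          apply norm_add_le
      _ ≤ |1 - u^2*s0/2| + C₃ * |u|^3 := by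
          rw [Complex.norm_real, Real.norm_eq_abs]
          exact add_le_add le_rfl hkey
  have hupos : 0 < |u| := abs_pos.mpr hu0
  have husq : |u|^2 = u^2 := sq_abs u
  have hq0 : |u| * s0 < 2 := (lt_div_iff₀ hs0).mp hu2
  have hq1 : u^2 * s0 / 2 ≤ |u| := by
    have h4 : |u| * (|u| * s0) ≤ |u| * 2 :=
      mul_le_mul_of_nonneg_left (le_of_lt hq0) (abs_nonneg u)
    nlinarith
  have habs1 : |1 - u^2*s0/2| = 1 - u^2*s0/2 := by
    rw [abs_of_nonneg]; linarith
  have hfinal : |1 - u^2*s0/2| + C₃*|u|^3 < 1 := by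
    rw [habs1]
    have hq2 : |u| * (2*(C₃+1)) < s0 := by
      have := (lt_div_iff₀ (by positivity : (0:ℝ) < 2*(C₃+1))).mp hu3
      linarith
    have h5 : |u|^3 = u^2 * |u| := by
      rw [pow_succ, husq]
    have h6 : 0 < u^2 := by positivity
    have h7 : C₃ * |u|^3 < u^2 * s0 / 2 := by
      rw [h5]
      nlinarith
    linarith
  exact lt_of_le_of_lt hmain hfinal
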